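/- Right Lax factorization: with W^±_m = e^{i[±(x_{m+1}-x_m)-p_m]}, the right Lax operator L̄_m(λ) = [[(W^+_m)^{-1}, Δλ W^-_m],[Δλ (W^-_m)^{-1}, W^+_m]] factorizes as L̄_m(λ) = D_{m+1}^{-1} Ū_m(λ), where D_m = diag(e^{ix_m}, e^{-ix_m}) and Ū_m(λ) = [[e^{i(x_m+p_m)}, Δλ e^{i(x_m-p_m)}],[Δλ e^{-i(x_m-p_m)}, e^{-i(x_m+p_m)}]]; consequently M̄(λ) = L̄_N(λ^{-1})···L̄_1(λ^{-1}) satisfies D_1 M̄(λ) D_1^{-1} = L̃̄_N(λ^{-1})···L̃̄_1(λ^{-1}) with ultralocal operators L̃̄_m(λ) := Ū_m(λ) D_m^{-1}. -/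
import Mathlib


open Matrix Complex

noncomputable section

abbrev M2 (A : Type*) := Matrix (Fin 2) (Fin 2) A
abbrev M4 (A : Type*) := Matrix (Fin 2 × Fin 2) (Fin 2 × Fin 2) A

/-- `X ⊗ Id` : the embedding of a 2×2 matrix into auxiliary space `a`. -/
def embA {A : Type*} [Zero A] (X : M2 A) : M4 A :=
  fun p q => if p.2 = q.2 then X p.1 q.1 else 0

/-- `Id ⊗ X` : the embedding of a 2×2 matrix into auxiliary space `b`. -/
def embB {A : Type*} [Zero A] (X : M2 A) : M4 A :=
  fun p q => if p.1 = q.1 then X p.2 q.2 else 0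

/-- The trigonometric R-matrix. -/
def Rmat (q ξ : ℂ) : M4 ℂ :=
  fun p r =>
    if p = r then (if p.1 = p.2 then 1 else (ξ⁻¹ - ξ) / (q⁻¹ * ξ⁻¹ - q * ξ))
    else if p.1 = r.2 ∧ p.2 = r.1 then (q⁻¹ - q) / (q⁻¹ * ξ⁻¹ - q * ξ)
    else 0

/-- The R-matrix with (scalar) entries viewed inside the algebra `A`. -/
def RA (A : Type*) [Ring A] [Algebra ℂ A] (q ξ : ℂ) : M4 A :=
  (Rmat q ξ).map (algebraMap ℂ A)

/-- Z = diag(q^{-1/2}, q^{1/2}, q^{1/2}, q^{-1/2}), written via `s = q^{1/2}`. -/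
def Zmat (s : ℂ) : M4 ℂ :=
  Matrix.diagonal (fun p => if p.1 = p.2 then s⁻¹ else s)

/-- The permutation (swap) matrix on ℂ²⊗ℂ². -/
def Pswap : M4 ℂ := fun p q => if p.1 = q.2 ∧ p.2 = q.1 then 1 else 0

/-- Right Lax factorization `L̄_m(λ) = D_{m+1}⁻¹ Ū_m(λ)` and the resulting
telescoping identity `D₁ M̄(λ) D₁⁻¹ = L̃̄_N(λ⁻¹) ⋯ L̃̄_1(λ⁻¹)` with the
ultralocal operators `L̃̄_m(λ) = Ū_m(λ) D_m⁻¹`.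
Here `E m a b` stands for `e^{i(a·x_m + b·p_m)}` with periodic sites. -/
theorem right_lax_factorization {A : Type*} [Ring A] [Algebra ℂ A]
    (N : ℕ) (β : ℝ) (E : ZMod N → ℂ → ℂ → A)
    (hE0 : ∀ m, E m 0 0 = 1)
    (hEmul : ∀ m a b c d, E m a b * E m c d =
      Complex.exp (-(a * d - b * c) * (Real.pi * β ^ 2) * Complex.I / 4) •
        E m (a + c) (b + d))
    (hEcomm : ∀ m n a b c d, m ≠ n → E m a b * E n c d = E n c d * E m a b)
    (Δ : ℂ) :
    -- W^±_m = e^{i[±(x_{m+1}-x_m)-p_m]} and their inverses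
    let Wp : ZMod N → A := fun m => E (m + 1) 1 0 * E m (-1) (-1)
    let Wm : ZMod N → A := fun m => E (m + 1) (-1) 0 * E m 1 (-1)
    let WpInv : ZMod N → A := fun m => E (m + 1) (-1) 0 * E m 1 1
    let WmInv : ZMod N → A := fun m => E (m + 1) 1 0 * E m (-1) 1
    -- L̄_m(λ) = [[(W^+_m)⁻¹, Δλ W^-_m],[Δλ (W^-_m)⁻¹, W^+_m]]
    let Lbar : ZMod N → ℂ → M2 A := fun m lam =>
      !![WpInv m, (Δ * lam) • Wm m; (Δ * lam) • WmInv m, Wp m]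
    let D : ZMod N → M2 A := fun m => !![E m 1 0, 0; 0, E m (-1) 0]
    let Dinv : ZMod N → M2 A := fun m => !![E m (-1) 0, 0; 0, E m 1 0]
    let Ubar : ZMod N → ℂ → M2 A := fun m lam =>
      !![E m 1 1, (Δ * lam) • E m 1 (-1);
         (Δ * lam) • E m (-1) 1, E m (-1) (-1)]
    -- M̄(λ) = L̄_N(λ⁻¹) ⋯ L̄_1(λ⁻¹)
    let Mbar : ℂ → M2 A := fun lam =>
      ((List.range N).map (fun k => Lbar ((N - k : ℕ) : ZMod N) lam⁻¹)).prod
    (∀ (m : ZMod N) (lam : ℂ), Lbar m lam = Dinv (m + 1) * Ubar m lam) ∧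
    (∀ lam : ℂ, D 1 * Mbar lam * Dinv 1 =
      ((List.range N).map
        (fun k => Ubar ((N - k : ℕ) : ZMod N) lam⁻¹ *
                  Dinv ((N - k : ℕ) : ZMod N))).prod) := by

  intro Wp Wm WpInv WmInv Lbar D Dinv Ubar Mbar
  have hc1 : ∀ m : ZMod N, E m 1 0 * E m (-1) 0 = 1 := by
    intro m
    rw [hEmul]
    norm_num [hE0]
  have hc2 : ∀ m : ZMod N, E m (-1) 0 * E m 1 0 = 1 := by
    intro m
    rw [hEmul]
    norm_num [hE0]
  have hDD : ∀ m : ZMod N, D m * Dinv m = 1 := by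
    intro m
    show !![E m 1 0, 0; 0, E m (-1) 0] * !![E m (-1) 0, 0; 0, E m 1 0] = 1
    ext i j
    fin_cases i <;> fin_cases j <;>
      simp [Matrix.mul_apply, Fin.sum_univ_two, hc1, hc2, Matrix.one_apply]
  have hDinvD : ∀ m : ZMod N, Dinv m * D m = 1 := by
    intro m
    show !![E m (-1) 0, 0; 0, E m 1 0] * !![E m 1 0, 0; 0, E m (-1) 0] = 1
    ext i j
    fin_cases i <;> fin_cases j <;>
      simp [Matrix.mul_apply, Fin.sum_univ_two, hc1, hc2, Matrix.one_apply]
  have h1 : ∀ (m : ZMod N) (lam : ℂ), Lbar m lam = Dinv (m + 1) * Ubar m lam := by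
    intro m lam
    show !![WpInv m, (Δ * lam) • Wm m; (Δ * lam) • WmInv m, Wp m]
        = !![E (m+1) (-1) 0, 0; 0, E (m+1) 1 0] *
          !![E m 1 1, (Δ * lam) • E m 1 (-1); (Δ * lam) • E m (-1) 1, E m (-1) (-1)]
    show !![E (m + 1) (-1) 0 * E m 1 1, (Δ * lam) • (E (m + 1) (-1) 0 * E m 1 (-1));
            (Δ * lam) • (E (m + 1) 1 0 * E m (-1) 1), E (m + 1) 1 0 * E m (-1) (-1)] = _
    ext i j
    fin_cases i <;> fin_cases j <;>
      simp [Matrix.mul_apply, Fin.sum_univ_two, mul_smul_comm]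
  refine ⟨h1, ?_⟩
  intro lam
  have main : ∀ n ≤ N,
      ((List.range n).map (fun k => Lbar ((N - k : ℕ) : ZMod N) lam⁻¹)).prod
        = Dinv 1 *
          ((List.range n).map (fun k => Ubar ((N - k : ℕ) : ZMod N) lam⁻¹ *
              Dinv ((N - k : ℕ) : ZMod N))).prod * D (1 - (n : ZMod N)) := by
    intro n hn
    induction n with
    | zero =>
        simp [hDinvD 1]
    | succ n ih =>
        have hn' : n ≤ N := Nat.le_of_succ_le hn
        have hcast : ((N - n : ℕ) : ZMod N) = -(n : ZMod N) := by
          rw [Nat.cast_sub hn', ZMod.natCast_self, zero_sub]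
        have hcast2 : (1 : ZMod N) - ((n + 1 : ℕ) : ZMod N) = -(n : ZMod N) := by
          push_cast
          ring
        rw [List.range_succ, List.map_append, List.map_append, List.prod_append,
          List.prod_append, ih hn', List.map_singleton, List.map_singleton,
          List.prod_singleton, List.prod_singleton, h1, hcast, hcast2]
        have e1 : -(n : ZMod N) + 1 = 1 - (n : ZMod N) := by ring
        rw [e1]
        simp only [mul_assoc]
        rw [← mul_assoc (D (1 - (n : ZMod N))), hDD, one_mul, hDinvD, mul_one]
  have hM : Mbar lam = Dinv 1 *
      ((List.range N).map (fun k => Ubar ((N - k : ℕ) : ZMod N) lam⁻¹ *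
          Dinv ((N - k : ℕ) : ZMod N))).prod * D 1 := by
    have := main N le_rfl
    rwa [ZMod.natCast_self, sub_zero] at this
  rw [hM]
  simp only [← mul_assoc, hDD 1]
  rw [one_mul, mul_assoc, hDD 1, mul_one]
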